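/- For n ≥ 3, the transvection subgroup of Aut(C(B_n)), i.e., the subgroup consisting of all transvections of the Artin group C(B_n), is infinite cyclic. -/

import Mathlib

/-- The defining relations of the Artin group of type `B_n`, on generators `s_1, …, s_n`
(indexed by `Fin n`, so `s_{i+1}` corresponds to the index `i`):
`s_1 s_2 s_1 s_2 = s_2 s_1 s_2 s_1`, the braid relation `s_i s_{i+1} s_i = s_{i+1} s_i s_{i+1}`
for `2 ≤ i ≤ n-1`, and the commutation `s_i s_j = s_j s_i` for `|i - j| ≥ 2`. -/
def typeBRels (n : ℕ) : Set (FreeGroup (Fin n)) :=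
  {r | (∃ i j : Fin n, (i : ℕ) = 0 ∧ (j : ℕ) = 1 ∧
          r = (.of i * .of j) ^ 2 * ((.of j * .of i) ^ 2)⁻¹) ∨
       (∃ i j : Fin n, 1 ≤ (i : ℕ) ∧ (i : ℕ) + 1 = (j : ℕ) ∧
          r = .of i * .of j * .of i * (.of j * .of i * .of j)⁻¹) ∨
       (∃ i j : Fin n, (i : ℕ) + 2 ≤ (j : ℕ) ∧
          r = .of i * .of j * (.of j * .of i)⁻¹)}

/-- The Artin group of type `B_n`. -/
abbrev ArtinB (n : ℕ) : Type := PresentedGroup (typeBRels n)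

/-- The standard generator `s_{i+1}` of the Artin group of type `B_n`. -/
def artinBGen {n : ℕ} (i : Fin n) : ArtinB n := PresentedGroup.of i

/-- The element `z = (s_1 s_2 ⋯ s_n)^n`, which generates the center of the Artin group of
type `B_n`. -/
def artinBTwist (n : ℕ) : ArtinB n :=
  ((List.ofFn fun i : Fin n => artinBGen i).prod) ^ n

/-- An automorphism of a group `G` is a transvection (with respect to the central element
`z`) if it has the form `x ↦ x * z ^ t x` for some homomorphism `t : G → ℤ`. -/
def IsTransvection {G : Type*} [Group G] (z : G) (φ : MulAut G) : Prop :=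
  ∃ t : G → ℤ, (∀ x y : G, t (x * y) = t x + t y) ∧ ∀ x : G, φ x = x * z ^ t x

namespace AB

variable {n : ℕ}

/-- generator as a function of a natural number index, junk value 1 out of range -/
def sg (n : ℕ) (i : ℕ) : ArtinB n := if h : i < n then artinBGen ⟨i, h⟩ else 1

lemma mk_rel {r : FreeGroup (Fin n)} (h : r ∈ typeBRels n) :
    PresentedGroup.mk (typeBRels n) r = 1 :=
  (QuotientGroup.eq_one_iff r).mpr (Subgroup.subset_normalClosure h)

lemma mk_of (i : Fin n) : PresentedGroup.mk (typeBRels n) (FreeGroup.of i) = artinBGen i := rfl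

lemma rel1 (h : 1 < n) : sg n 0 * sg n 1 * sg n 0 * sg n 1 = sg n 1 * sg n 0 * sg n 1 * sg n 0 := by
  have h0 : (0:ℕ) < n := by omega
  have e := mk_rel (n := n) (Or.inl ⟨⟨0, h0⟩, ⟨1, h⟩, rfl, rfl, rfl⟩)
  simp only [map_mul, map_inv, map_pow, mk_of, mul_inv_eq_one] at e
  simp only [sg, dif_pos h0, dif_pos h]
  rw [show ∀ a b : ArtinB n, a*b*a*b = (a*b)^2 by intros; rw [pow_two]; noncomm_ring,
      show ∀ a b : ArtinB n, b*a*b*a = (b*a)^2 by intros; rw [pow_two]; noncomm_ring, e]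

lemma braid {i : ℕ} (h1 : 1 ≤ i) (h2 : i + 1 < n) :
    sg n i * sg n (i+1) * sg n i = sg n (i+1) * sg n i * sg n (i+1) := by
  have hi : i < n := by omega
  have e := mk_rel (n := n) (Or.inr (Or.inl ⟨⟨i, hi⟩, ⟨i+1, h2⟩, h1, rfl, rfl⟩))
  simp only [map_mul, map_inv, mk_of, mul_inv_eq_one] at e
  simp only [sg, dif_pos hi, dif_pos h2]
  exact e

lemma comm {i j : ℕ} (h : i + 2 ≤ j) : sg n i * sg n j = sg n j * sg n i := by
  by_cases hj : j < n
  · have hi : i < n := by omega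
    have e := mk_rel (n := n) (Or.inr (Or.inr ⟨⟨i, hi⟩, ⟨j, hj⟩, h, rfl⟩))
    simp only [map_mul, map_inv, mk_of, mul_inv_eq_one] at e
    simp only [sg, dif_pos hi, dif_pos hj]
    exact e
  · simp [sg, dif_neg hj]

end AB

namespace AB

variable {n : ℕ}

/-- the product `sg a * sg (a+1) * ⋯ * sg (a+k-1)` -/
def Q (n : ℕ) : ℕ → ℕ → ArtinB n
  | _, 0 => 1
  | a, k+1 => sg n a * Q n (a+1) k

lemma Q_zero (a : ℕ) : Q n a 0 = 1 := rfl
lemma Q_succ (a k : ℕ) : Q n a (k+1) = sg n a * Q n (a+1) k := rfl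

lemma Q_add (a k m : ℕ) : Q n a (k+m) = Q n a k * Q n (a+k) m := by
  induction k generalizing a with
  | zero => simp [Q_zero]
  | succ k ih =>
      rw [show k+1+m = (k+m)+1 from by omega, Q_succ, Q_succ, ih (a+1),
        show a+1+k = a+(k+1) from by omega, mul_assoc]

lemma comm' {i j : ℕ} (h : i + 2 ≤ j) (X : ArtinB n) :
    sg n i * (sg n j * X) = sg n j * (sg n i * X) := by
  simp only [← mul_assoc]; rw [comm h]

lemma sg_comm_Q (i k : ℕ) : ∀ a, i + 2 ≤ a → sg n i * Q n a k = Q n a k * sg n i := by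
  induction k with
  | zero => intro a _; simp [Q_zero]
  | succ k ih =>
      intro a h
      rw [Q_succ, ← mul_assoc, comm h, mul_assoc, ih (a+1) (by omega), mul_assoc]

lemma Q_comm_sg (m k : ℕ) : ∀ a, a + k + 1 ≤ m → Q n a k * sg n m = sg n m * Q n a k := by
  induction k with
  | zero => intro a _; simp [Q_zero]
  | succ k ih =>
      intro a h
      rw [Q_succ, mul_assoc, ih (a+1) (by omega), comm' (show a + 2 ≤ m from by omega)]

/-- tailed versions for rewriting -/
lemma rel1' (h : 1 < n) (X : ArtinB n) :
    sg n 0 * (sg n 1 * (sg n 0 * (sg n 1 * X))) = sg n 1 * (sg n 0 * (sg n 1 * (sg n 0 * X))) := by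
  simp only [← mul_assoc]; rw [rel1 h]

lemma braid' {i : ℕ} (h1 : 1 ≤ i) (h2 : i + 1 < n) (X : ArtinB n) :
    sg n i * (sg n (i+1) * (sg n i * X)) = sg n (i+1) * (sg n i * (sg n (i+1) * X)) := by
  simp only [← mul_assoc]; rw [braid h1 h2]

lemma sg_comm_Q' (i k a : ℕ) (h : i + 2 ≤ a) (X : ArtinB n) :
    sg n i * (Q n a k * X) = Q n a k * (sg n i * X) := by
  simp only [← mul_assoc]; rw [sg_comm_Q i k a h]

lemma Q_comm_sg' (m k a : ℕ) (h : a + k + 1 ≤ m) (X : ArtinB n) :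
    Q n a k * (sg n m * X) = sg n m * (Q n a k * X) := by
  simp only [← mul_assoc]; rw [Q_comm_sg m k a h]

lemma Q_comm_sg_lo' (i k a : ℕ) (h : i + 2 ≤ a) (X : ArtinB n) :
    Q n a k * (sg n i * X) = sg n i * (Q n a k * X) := by
  simp only [← mul_assoc]; rw [← sg_comm_Q i k a h]

lemma sg_comm_Qinv (i k a : ℕ) (h : i + 2 ≤ a) :
    sg n i * (Q n a k)⁻¹ = (Q n a k)⁻¹ * sg n i := by
  have hc : Commute (sg n i) (Q n a k) := sg_comm_Q i k a h
  exact hc.inv_right.eq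

lemma sg_comm_Qinv' (i k a : ℕ) (h : i + 2 ≤ a) (X : ArtinB n) :
    sg n i * ((Q n a k)⁻¹ * X) = (Q n a k)⁻¹ * (sg n i * X) := by
  simp only [← mul_assoc]; rw [sg_comm_Qinv i k a h]

/-- The element `δ = s_1 s_2 ⋯ s_n`. -/
def dl (n : ℕ) : ArtinB n := Q n 0 n

lemma dl_split1 (h : 1 ≤ n) : dl n = sg n 0 * Q n 1 (n-1) := by
  rw [dl, show Q n 0 n = Q n 0 ((n-1)+1) from congrArg _ (by omega), Q_succ]

lemma dl_split2 (h : 2 ≤ n) : dl n = sg n 0 * (sg n 1 * Q n 2 (n-2)) := by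
  rw [dl, show Q n 0 n = Q n 0 ((n-2)+1+1) from congrArg _ (by omega), Q_succ, Q_succ]

lemma L1 {i : ℕ} (h1 : 1 ≤ i) (h2 : i + 2 ≤ n) : dl n * sg n i = sg n (i+1) * dl n := by
  have hsplit : dl n = Q n 0 i * (sg n i * (sg n (i+1) * Q n (i+2) (n-(i+2)))) := by
    rw [dl, show Q n 0 n = Q n 0 (i + 2 + (n-(i+2))) from congrArg _ (by omega),
      Q_add (n := n) 0 (i+2) (n-(i+2)), show (0:ℕ)+(i+2) = i+2 from by omega,
      Q_add (n := n) 0 i 2, show (0:ℕ)+i = i from by omega, Q_succ, Q_succ, Q_zero,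
      mul_one]
    simp only [mul_assoc]
  rw [hsplit]
  simp only [mul_assoc]
  rw [← sg_comm_Q i (n-(i+2)) (i+2) (le_refl (i+2)), braid' h1 (by omega),
    Q_comm_sg' (i+1) i 0 (by omega)]

lemma L2 (h : 2 ≤ n) :
    dl n * sg n 0 = (sg n 1)⁻¹ * (sg n 0 * (sg n 1 * dl n)) := by
  rw [dl_split2 h]
  simp only [mul_assoc]
  rw [← sg_comm_Q 0 (n-2) 2 (by omega), rel1' (by omega), inv_mul_cancel_left]

lemma L3a (k : ℕ) : ∀ (a : ℕ), 1 ≤ a → a + k + 1 = n →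
    Q n a (k+1) * sg n (a+k) =
      (Q n (a+1) k)⁻¹ * (sg n a * (Q n (a+1) k * Q n a (k+1))) := by
  induction k with
  | zero =>
      intro a _ _
      simp [Q_zero, Q_succ]
  | succ k ih =>
      intro a ha hn'
      have hQ2 : Q n a (k+2) = sg n a * (sg n (a+1) * Q n (a+2) k) := by
        rw [Q_succ, Q_succ]
      have hQ1 : Q n (a+1) (k+1) = sg n (a+1) * Q n (a+2) k := by rw [Q_succ]
      calc Q n a (k+1+1) * sg n (a+(k+1))
          = sg n a * (Q n (a+1) (k+1) * sg n ((a+1)+k)) := by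
            rw [Q_succ, mul_assoc, show a+(k+1) = (a+1)+k from by omega]
        _ = sg n a * ((Q n (a+2) k)⁻¹ *
              (sg n (a+1) * (Q n (a+2) k * Q n (a+1) (k+1)))) := by
            rw [ih (a+1) (by omega) (by omega)]
        _ = (Q n (a+2) k)⁻¹ * (sg n a * (sg n (a+1) * (Q n (a+2) k * Q n (a+1) (k+1)))) := by
            rw [sg_comm_Qinv' a k (a+2) (by omega)]
        _ = (Q n (a+1) (k+1))⁻¹ * (sg n a * (Q n (a+1) (k+1) * Q n a (k+1+1))) := by
            rw [hQ1, hQ2, mul_inv_rev]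
            simp only [mul_assoc]
            congr 1
            rw [Q_comm_sg_lo' a k (a+2) (by omega), braid' ha (by omega),
              inv_mul_cancel_left]

lemma L3 (h : 3 ≤ n) :
    dl n * sg n (n-1) =
      (Q n 2 (n-2))⁻¹ * (sg n 0 * (sg n 1 * ((sg n 0)⁻¹ * (Q n 2 (n-2) * dl n)))) := by
  have key := L3a (n := n) (n-2) 1 (by omega) (by omega)
  rw [show (1:ℕ)+(n-2) = n-1 from by omega] at key
  norm_num at key
  have hd : dl n = sg n 0 * Q n 1 (n-1) := dl_split1 (by omega)
  have hr : (sg n 0)⁻¹ * (Q n 2 (n-2) * dl n) = Q n 2 (n-2) * Q n 1 (n-1) := by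
    rw [hd, Q_comm_sg_lo' 0 (n-2) 2 (by omega), inv_mul_cancel_left]
  rw [hr]
  rw [show Q n 1 ((n-2)+1) = Q n 1 (n-1) from congrArg _ (by omega)] at key
  calc dl n * sg n (n-1) = sg n 0 * (Q n 1 (n-1) * sg n (n-1)) := by rw [hd, mul_assoc]
    _ = sg n 0 * ((Q n 2 (n-2))⁻¹ * (sg n 1 * (Q n 2 (n-2) * Q n 1 (n-1)))) := by rw [key]
    _ = (Q n 2 (n-2))⁻¹ * (sg n 0 * (sg n 1 * (Q n 2 (n-2) * Q n 1 (n-1)))) := by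
        rw [sg_comm_Qinv' 0 (n-2) 2 (by omega)]

lemma dl_Q (k : ℕ) : ∀ a, 1 ≤ a → a + k + 1 ≤ n →
    dl n * Q n a k = Q n (a+1) k * dl n := by
  induction k with
  | zero => intro a _ _; simp [Q_zero]
  | succ k ih =>
      intro a ha hk
      rw [Q_succ, Q_succ, ← mul_assoc, L1 ha (by omega), mul_assoc,
        ih (a+1) (by omega) (by omega), ← mul_assoc]

lemma dl_Qinv (k a : ℕ) (ha : 1 ≤ a) (hk : a + k + 1 ≤ n) :
    dl n * (Q n a k)⁻¹ = (Q n (a+1) k)⁻¹ * dl n := by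
  have h1 := dl_Q (n := n) k a ha hk
  calc dl n * (Q n a k)⁻¹
      = (Q n (a+1) k)⁻¹ * (Q n (a+1) k * (dl n * (Q n a k)⁻¹)) := by
        rw [inv_mul_cancel_left]
    _ = (Q n (a+1) k)⁻¹ * dl n := by
        congr 1
        rw [← mul_assoc, ← h1, mul_assoc, mul_inv_cancel, mul_one]

lemma pow_sg1 (k : ℕ) : k + 2 ≤ n → dl n ^ k * sg n 1 = sg n (1+k) * dl n ^ k := by
  induction k with
  | zero => intro _; simp
  | succ k ih =>
      intro h
      rw [pow_succ', mul_assoc, ih (by omega), ← mul_assoc,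
        L1 (show 1 ≤ 1+k from by omega) (by omega), mul_assoc, ← pow_succ',
        show 1+k+1 = 1+(k+1) from by omega]

lemma pow_sg0 (k : ℕ) : 1 ≤ k → k + 1 ≤ n →
    dl n ^ k * sg n 0 = (Q n 1 k)⁻¹ * (sg n 0 * (Q n 1 k * dl n ^ k)) := by
  induction k with
  | zero => intro h1 _; exact absurd h1 (by omega)
  | succ k ih =>
      intro h1 h2
      rcases Nat.eq_zero_or_pos k with hk0 | hk1
      · subst hk0
        simpa [Q_succ, Q_zero] using L2 (n := n) (by omega)
      · rw [pow_succ', mul_assoc, ih hk1 (by omega), ← mul_assoc,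
          dl_Qinv k 1 (by omega) (by omega)]
        simp only [mul_assoc]
        rw [← mul_assoc (dl n), L2 (by omega)]
        simp only [mul_assoc]
        rw [← mul_assoc (dl n), dl_Q k 1 (by omega) (by omega)]
        rw [show Q n 1 (k+1) = sg n 1 * Q n 2 k from Q_succ 1 k, mul_inv_rev]
        simp only [mul_assoc, ← pow_succ']

lemma zc0 (h : 3 ≤ n) : dl n ^ n * sg n 0 = sg n 0 * dl n ^ n := by
  have hd : dl n = sg n 0 * Q n 1 (n-1) := dl_split1 (by omega)
  have e1 : dl n ^ n = dl n * dl n ^ (n-1) := by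
    rw [← pow_succ', show (n:ℕ)-1+1 = n from by omega]
  have e2 : dl n * (Q n 1 (n-1))⁻¹ = sg n 0 := by
    rw [hd, mul_assoc, mul_inv_cancel, mul_one]
  calc dl n ^ n * sg n 0
      = dl n * (dl n ^ (n-1) * sg n 0) := by rw [e1, mul_assoc]
    _ = dl n * ((Q n 1 (n-1))⁻¹ * (sg n 0 * (Q n 1 (n-1) * dl n ^ (n-1)))) := by
        rw [pow_sg0 (n-1) (by omega) (by omega)]
    _ = sg n 0 * (sg n 0 * (Q n 1 (n-1) * dl n ^ (n-1))) := by rw [← mul_assoc, e2]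
    _ = sg n 0 * dl n ^ n := by rw [e1, hd, mul_assoc]

lemma zc1 (h : 3 ≤ n) : dl n ^ n * sg n 1 = sg n 1 * dl n ^ n := by
  have hd : dl n = sg n 0 * (sg n 1 * Q n 2 (n-2)) := dl_split2 (by omega)
  have e1 : dl n ^ n = dl n * (dl n * dl n ^ (n-2)) := by
    rw [← pow_succ', ← pow_succ', show (n:ℕ)-2+1+1 = n from by omega]
  have e15 : dl n * dl n ^ (n-2) = dl n ^ (n-1) := by
    rw [← pow_succ', show (n:ℕ)-2+1 = n-1 from by omega]
  have e2 : dl n * (Q n 2 (n-2))⁻¹ = sg n 0 * sg n 1 := by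
    rw [hd, mul_assoc, mul_assoc, mul_inv_cancel, mul_one]
  calc dl n ^ n * sg n 1
      = dl n * (dl n * (dl n ^ (n-2) * sg n 1)) := by rw [e1]; simp only [mul_assoc]
    _ = dl n * (dl n * (sg n (1+(n-2)) * dl n ^ (n-2))) := by
        rw [pow_sg1 (n-2) (by omega)]
    _ = dl n * ((dl n * sg n (n-1)) * dl n ^ (n-2)) := by
        rw [show (1:ℕ)+(n-2) = n-1 from by omega]; simp only [mul_assoc]
    _ = dl n * ((Q n 2 (n-2))⁻¹ * (sg n 0 * (sg n 1 * ((sg n 0)⁻¹ *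
          (Q n 2 (n-2) * dl n)))) * dl n ^ (n-2)) := by rw [L3 h]
    _ = (dl n * (Q n 2 (n-2))⁻¹) * (sg n 0 * (sg n 1 * ((sg n 0)⁻¹ *
          (Q n 2 (n-2) * (dl n * dl n ^ (n-2)))))) := by simp only [mul_assoc]
    _ = sg n 0 * (sg n 1 * (sg n 0 * (sg n 1 * ((sg n 0)⁻¹ *
          (Q n 2 (n-2) * dl n ^ (n-1)))))) := by rw [e2, e15]; simp only [mul_assoc]
    _ = sg n 1 * (sg n 0 * (sg n 1 * (sg n 0 * ((sg n 0)⁻¹ *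
          (Q n 2 (n-2) * dl n ^ (n-1)))))) := by rw [rel1' (by omega)]
    _ = sg n 1 * (sg n 0 * (sg n 1 * (Q n 2 (n-2) * dl n ^ (n-1)))) := by
        rw [mul_inv_cancel_left]
    _ = sg n 1 * (dl n * dl n ^ (n-1)) := by rw [hd]; simp only [mul_assoc]
    _ = sg n 1 * dl n ^ n := by rw [← pow_succ', show (n:ℕ)-1+1 = n from by omega]

lemma zci (i : ℕ) (h2 : 2 ≤ i) (hi : i < n) (h : 3 ≤ n) :
    dl n ^ n * sg n i = sg n i * dl n ^ n := by
  have e : dl n ^ (i-1) * sg n 1 = sg n i * dl n ^ (i-1) := by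
    have := pow_sg1 (n := n) (i-1) (by omega)
    rwa [show (1:ℕ)+(i-1) = i from by omega] at this
  have : dl n ^ n * sg n i * dl n ^ (i-1) = sg n i * dl n ^ n * dl n ^ (i-1) := by
    calc dl n ^ n * sg n i * dl n ^ (i-1)
        = dl n ^ n * (sg n i * dl n ^ (i-1)) := by rw [mul_assoc]
      _ = dl n ^ n * (dl n ^ (i-1) * sg n 1) := by rw [← e]
      _ = dl n ^ (i-1) * (dl n ^ n * sg n 1) := by
          rw [← mul_assoc, pow_mul_comm, mul_assoc]
      _ = dl n ^ (i-1) * (sg n 1 * dl n ^ n) := by rw [zc1 h]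
      _ = (dl n ^ (i-1) * sg n 1) * dl n ^ n := by rw [mul_assoc]
      _ = sg n i * dl n ^ n * dl n ^ (i-1) := by
          rw [e, mul_assoc, mul_assoc, pow_mul_comm]
  exact mul_right_cancel this

end AB

namespace AB

variable {n : ℕ}

lemma sg_eq_gen (i : Fin n) : sg n i.val = artinBGen i := by
  simp [sg]

lemma sg_eq_gen' {i : ℕ} (h : i < n) : sg n i = artinBGen ⟨i, h⟩ := by
  simp [sg, h]

lemma z_comm_gen (h : 3 ≤ n) (j : Fin n) :
    dl n ^ n * artinBGen j = artinBGen j * dl n ^ n := by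
  obtain ⟨v, hvn⟩ := j
  rw [← sg_eq_gen ⟨v, hvn⟩]
  rcases v with _ | _ | m
  · exact zc0 h
  · exact zc1 h
  · exact zci (m+2) (by omega) hvn h

lemma z_comm (h : 3 ≤ n) (x : ArtinB n) : dl n ^ n * x = x * dl n ^ n := by
  have hx : x ∈ Subgroup.centralizer {dl n ^ n} := by
    apply PresentedGroup.generated_by
    intro j
    rw [Subgroup.mem_centralizer_iff]
    rintro g hg
    rw [Set.mem_singleton_iff] at hg
    subst hg
    exact z_comm_gen h j
  exact Subgroup.mem_centralizer_iff.mp hx _ rfl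

lemma Q_eq_prod (k : ℕ) : ∀ a, Q n a k = ((List.range' a k).map (sg n)).prod := by
  induction k with
  | zero => intro a; simp [Q_zero]
  | succ k ih => intro a; rw [List.range'_succ, Q_succ, List.map_cons, List.prod_cons, ih]

lemma twist_eq (h : 3 ≤ n) : artinBTwist n = dl n ^ n := by
  unfold artinBTwist
  congr 1
  rw [dl, Q_eq_prod n 0, ← List.range_eq_range']
  congr 1
  apply List.ext_getElem
  · simp
  · intro i h1 h2
    simp only [List.getElem_map, List.getElem_range, List.getElem_ofFn]
    have hin : i < n := by simpa using h2
    exact (sg_eq_gen' hin).symm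

lemma relLift {M : Type*} [CommGroup M] (f : Fin n → M)
    (hb : ∀ i j : Fin n, 1 ≤ (i:ℕ) → (i:ℕ)+1 = (j:ℕ) → f i = f j) :
    ∀ r ∈ typeBRels n, FreeGroup.lift f r = 1 := by
  rintro r (⟨i,j,hi,hj,rfl⟩|⟨i,j,hi,hj,rfl⟩|⟨i,j,hij,rfl⟩) <;>
    simp only [map_mul, map_inv, map_pow, FreeGroup.lift_apply_of, mul_inv_eq_one]
  · rw [mul_comm]
  · rw [hb i j hi hj]
  · rw [mul_comm]

/-- the length homomorphism: every generator is sent to 1 -/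
def lenHom (n : ℕ) : ArtinB n →* Multiplicative ℤ :=
  PresentedGroup.toGroup (relLift (fun _ => Multiplicative.ofAdd (1:ℤ)) (fun _ _ _ _ => rfl))

lemma lenHom_gen (i : Fin n) : lenHom n (artinBGen i) = Multiplicative.ofAdd (1:ℤ) :=
  PresentedGroup.toGroup.of _

lemma lenHom_sg {i : ℕ} (h : i < n) : lenHom n (sg n i) = Multiplicative.ofAdd (1:ℤ) := by
  rw [sg_eq_gen' h] ; exact lenHom_gen _

lemma lenHom_Q (k : ℕ) : ∀ a, a + k ≤ n →
    lenHom n (Q n a k) = Multiplicative.ofAdd (k:ℤ) := by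
  induction k with
  | zero => intro a _; simp [Q_zero]
  | succ k ih =>
      intro a h
      rw [Q_succ, map_mul, lenHom_sg (by omega), ih (a+1) (by omega),
        ← ofAdd_add]
      congr 1
      push_cast
      ring

lemma lenHom_dl (h : 3 ≤ n) : lenHom n (dl n) = Multiplicative.ofAdd (n:ℤ) := by
  rw [dl]; exact lenHom_Q n 0 (by omega)

lemma lenHom_z_pow (h : 3 ≤ n) (m : ℤ) :
    lenHom n ((dl n ^ n) ^ m) = Multiplicative.ofAdd (m * (n*n : ℤ)) := by
  rw [map_zpow, map_pow, lenHom_dl h]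
  rw [← ofAdd_nsmul, ← ofAdd_zsmul]
  congr 1

/-- the homomorphism ν with ν(s_1) = 1-n and ν(s_i) = 1 for i ≥ 2,
in particular ν(z) = 0. -/
def nuHom (n : ℕ) : ArtinB n →* Multiplicative ℤ :=
  PresentedGroup.toGroup (relLift
    (fun i => Multiplicative.ofAdd (if (i:ℕ) = 0 then 1 - (n:ℤ) else 1))
    (by intro i j hi hj
        have h1 : (i:ℕ) ≠ 0 := by omega
        have h2 : (j:ℕ) ≠ 0 := by omega
        simp [h1, h2]))

lemma nuHom_gen (i : Fin n) :
    nuHom n (artinBGen i) = Multiplicative.ofAdd (if (i:ℕ) = 0 then 1 - (n:ℤ) else 1) :=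
  PresentedGroup.toGroup.of _

lemma nuHom_sg {i : ℕ} (h : i < n) (h1 : 1 ≤ i) :
    nuHom n (sg n i) = Multiplicative.ofAdd (1:ℤ) := by
  rw [sg_eq_gen' h, nuHom_gen]
  have hne : i ≠ 0 := by omega
  simp [hne]

lemma nuHom_Q (k : ℕ) : ∀ a, 1 ≤ a → a + k ≤ n →
    nuHom n (Q n a k) = Multiplicative.ofAdd (k:ℤ) := by
  induction k with
  | zero => intro a _ _; simp [Q_zero]
  | succ k ih =>
      intro a ha h
      rw [Q_succ, map_mul, nuHom_sg (by omega) ha, ih (a+1) (by omega) (by omega),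
        ← ofAdd_add]
      congr 1
      push_cast
      ring

lemma nuHom_dl (h : 3 ≤ n) : nuHom n (dl n) = 1 := by
  rw [dl_split1 (by omega), map_mul, sg_eq_gen' (show (0:ℕ) < n from by omega), nuHom_gen,
    nuHom_Q (n-1) 1 le_rfl (by omega), ← ofAdd_add]
  simp only [Fin.val_mk, if_true, eq_self_iff_true, if_pos]
  rw [show (1 - (n:ℤ)) + ((n-1:ℕ):ℤ) = 0 from by omega]
  rfl

lemma nuHom_z (h : 3 ≤ n) : nuHom n (dl n ^ n) = 1 := by
  rw [map_pow, nuHom_dl h, one_pow]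

end AB

namespace AB

variable {n : ℕ}

lemma z_commute (h : 3 ≤ n) (x : ArtinB n) : Commute (dl n ^ n) x := z_comm h x

/-- the endomorphism `x ↦ x ⬝ z^(k ν(x))` -/
def E (h : 3 ≤ n) (k : ℤ) : ArtinB n →* ArtinB n :=
  MonoidHom.mk' (fun x => x * (dl n ^ n) ^ (k * (Multiplicative.toAdd (nuHom n x)))) (by
    intro x y
    set z := dl n ^ n with hz
    rw [map_mul, toAdd_mul, show k * (Multiplicative.toAdd (nuHom n x) + Multiplicative.toAdd (nuHom n y)) =
      k * Multiplicative.toAdd (nuHom n x) + k * Multiplicative.toAdd (nuHom n y) from by ring, zpow_add]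
    have hc : z ^ (k * Multiplicative.toAdd (nuHom n x)) * y = y * z ^ (k * Multiplicative.toAdd (nuHom n x)) :=
      ((z_commute h y).zpow_left _).eq
    rw [mul_assoc x y, ← mul_assoc y, ← hc]
    simp only [mul_assoc])

lemma E_apply (h : 3 ≤ n) (k : ℤ) (x : ArtinB n) :
    E h k x = x * (dl n ^ n) ^ (k * (Multiplicative.toAdd (nuHom n x))) := rfl

lemma E_comp (h : 3 ≤ n) (k j : ℤ) (x : ArtinB n) :
    E h k (E h j x) = E h (k + j) x := by
  simp only [E_apply]
  rw [map_mul, map_zpow, nuHom_z h, one_zpow, mul_one, mul_assoc, ← zpow_add]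
  congr 2
  ring

lemma E_zero_apply (h : 3 ≤ n) (x : ArtinB n) : E h 0 x = x := by
  rw [E_apply, zero_mul, zpow_zero, mul_one]

/-- the homomorphism `ℤ → Aut(ArtinB n)` whose range is the transvection subgroup -/
def Phi (h : 3 ≤ n) : Multiplicative ℤ →* MulAut (ArtinB n) where
  toFun k :=
    { toFun := E h (Multiplicative.toAdd k)
      invFun := E h (-(Multiplicative.toAdd k))
      left_inv := fun x => by rw [E_comp, neg_add_cancel, E_zero_apply]
      right_inv := fun x => by rw [E_comp, add_neg_cancel, E_zero_apply]
      map_mul' := (E h (Multiplicative.toAdd k)).map_mul }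
  map_one' := by
    ext x
    exact E_zero_apply h x
  map_mul' k j := by
    ext x
    exact (E_comp h (Multiplicative.toAdd k) (Multiplicative.toAdd j) x).symm

lemma Phi_apply (h : 3 ≤ n) (k : Multiplicative ℤ) (x : ArtinB n) :
    Phi h k x = x * (dl n ^ n) ^ ((Multiplicative.toAdd k) * (Multiplicative.toAdd (nuHom n x))) :=
  rfl

lemma nuHom_gen1 (h : 3 ≤ n) : nuHom n (artinBGen ⟨1, by omega⟩) = Multiplicative.ofAdd (1:ℤ) := by
  rw [nuHom_gen]
  norm_num

lemma Phi_inj (h : 3 ≤ n) : Function.Injective (Phi h) := by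
  rw [injective_iff_map_eq_one]
  intro k hk
  have h1 : Phi h k (artinBGen ⟨1, by omega⟩) = artinBGen ⟨1, by omega⟩ := by
    rw [hk]; rfl
  rw [Phi_apply, nuHom_gen1 h] at h1
  simp only [toAdd_ofAdd, mul_one] at h1
  have h2 : (dl n ^ n) ^ (Multiplicative.toAdd k) = 1 := by
    have := mul_eq_left.mp h1
    exact this
  have h3 := congrArg (lenHom n) h2
  rw [lenHom_z_pow h, map_one] at h3
  have h4 : (Multiplicative.toAdd k) * ((n:ℤ) * n) = 0 := by
    have h4' := congrArg Multiplicative.toAdd h3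
    simp only [toAdd_ofAdd, toAdd_one] at h4'
    exact h4'
  have h5 : Multiplicative.toAdd k = 0 := by
    have hn : (n:ℤ) ≠ 0 := by exact_mod_cast (by omega : n ≠ 0)
    rcases mul_eq_zero.mp h4 with h' | h'
    · exact h'
    · exact absurd (mul_self_eq_zero.mp h') hn
  have : k = Multiplicative.ofAdd (Multiplicative.toAdd k) := rfl
  rw [this, h5]
  rfl

end AB

namespace AB

variable {n : ℕ}

lemma isTransvection_of_mem (h : 3 ≤ n) (k : Multiplicative ℤ) :
    IsTransvection (artinBTwist n) (Phi h k) := by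
  refine ⟨fun x => (Multiplicative.toAdd k) * (Multiplicative.toAdd (nuHom n x)), ?_, ?_⟩
  · intro x y; dsimp only; rw [map_mul, toAdd_mul]; ring
  · intro x; rw [Phi_apply, twist_eq h]

lemma mem_of_isTransvection (h : 3 ≤ n) (φ : MulAut (ArtinB n))
    (hφ : IsTransvection (artinBTwist n) φ) : ∃ k, Phi h k = φ := by
  obtain ⟨t, hadd, heq⟩ := hφ
  rw [show artinBTwist n = dl n ^ n from twist_eq h] at heq
  have ht1 : t 1 = 0 := by have := hadd 1 1; rw [mul_one] at this; omega
  set T : ArtinB n →* Multiplicative ℤ := MonoidHom.mk' (fun x => Multiplicative.ofAdd (t x))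
    (fun x y => by rw [hadd, ofAdd_add]) with hT
  have hTapp : ∀ x, T x = Multiplicative.ofAdd (t x) := fun x => rfl
  set b := t (sg n 1) with hb
  set a0 := t (sg n 0) with ha0
  have hA1 : ∀ i, 1 ≤ i → i < n → t (sg n i) = b := by
    intro i
    induction i with
    | zero => intro h1 _; exact absurd h1 (by omega)
    | succ i ih =>
        intro h1 h2
        rcases Nat.eq_zero_or_pos i with hi0 | hi1
        · subst hi0; rfl
        · have hbr := congrArg t (braid (n := n) hi1 (by omega))
          rw [hadd, hadd, hadd, hadd] at hbr
          have hih := ih (by omega) (by omega)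
          omega
  have hQv : ∀ k, ∀ a, 1 ≤ a → a + k ≤ n → t (Q n a k) = (k:ℤ) * b := by
    intro k
    induction k with
    | zero => intro a _ _; rw [Q_zero]; simp [ht1]
    | succ k ih =>
        intro a h1 h2
        rw [Q_succ, hadd, hA1 a h1 (by omega), ih (a+1) (by omega) (by omega)]
        push_cast
        ring
  have hdl : t (dl n) = a0 + ((n:ℤ)-1) * b := by
    rw [dl_split1 (show 1 ≤ n from by omega), hadd, hQv (n-1) 1 le_rfl (by omega), ← ha0,
      show ((n-1 : ℕ):ℤ) = (n:ℤ)-1 from by omega]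
  have hzv : t (dl n ^ n) = (n:ℤ) * (a0 + ((n:ℤ)-1) * b) := by
    have h2 := congrArg Multiplicative.toAdd (map_pow T (dl n) n)
    rw [hTapp, hTapp, toAdd_pow, toAdd_ofAdd, toAdd_ofAdd] at h2
    rw [h2, hdl, nsmul_eq_mul]
  have tz_pow : ∀ (x : ArtinB n) (m : ℤ), t (x ^ m) = m * t x := by
    intro x m
    have h2 := congrArg Multiplicative.toAdd (map_zpow T x m)
    rw [hTapp, hTapp, toAdd_zpow, toAdd_ofAdd, toAdd_ofAdd, smul_eq_mul] at h2
    exact h2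
  obtain ⟨x0, hx0⟩ := φ.surjective (sg n 0)
  obtain ⟨x1, hx1⟩ := φ.surjective (sg n 1)
  have e0 : a0 = t x0 + t x0 * t (dl n ^ n) := by
    have h1 : sg n 0 = x0 * (dl n ^ n) ^ t x0 := by rw [← hx0, heq x0]
    have h2 := congrArg t h1
    rwa [hadd, tz_pow] at h2
  have e1 : b = t x1 + t x1 * t (dl n ^ n) := by
    have h1 : sg n 1 = x1 * (dl n ^ n) ^ t x1 := by rw [← hx1, heq x1]
    have h2 := congrArg t h1
    rwa [hadd, tz_pow] at h2
  set c : ℤ := 1 + t (dl n ^ n) with hc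
  have h1 : t (dl n ^ n) = c * ((n:ℤ) * (t x0 + ((n:ℤ)-1) * t x1)) := by
    have e0' : a0 = t x0 * c := by rw [hc]; rw [e0]; ring
    have e1' : b = t x1 * c := by rw [hc]; rw [e1]; ring
    rw [hzv, e0', e1']; ring
  have key : c * (1 - ((n:ℤ) * (t x0 + ((n:ℤ)-1) * t x1))) = 1 := by
    calc c * (1 - ((n:ℤ) * (t x0 + ((n:ℤ)-1) * t x1)))
        = c - c * ((n:ℤ) * (t x0 + ((n:ℤ)-1) * t x1)) := by ring
      _ = c - t (dl n ^ n) := by rw [← h1]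
      _ = 1 := by rw [hc]; ring
  have hunit := Int.isUnit_iff.mp (IsUnit.of_mul_eq_one _ key)
  have htz : t (dl n ^ n) = 0 := by
    rcases hunit with hc1 | hc1
    · omega
    · exfalso
      have hs : (-2 : ℤ) = (n:ℤ) * (a0 + ((n:ℤ)-1)*b) := by rw [← hzv]; omega
      have hdvd : (n:ℤ) ∣ 2 := by
        have hd : (n:ℤ) ∣ -2 := ⟨a0 + ((n:ℤ)-1)*b, hs⟩
        exact (dvd_neg).mp hd
      have h2 := Int.le_of_dvd (by norm_num) hdvd
      have h3n : (3:ℤ) ≤ (n:ℤ) := by exact_mod_cast h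
      linarith
  have hs0 : a0 = b * (1 - (n:ℤ)) := by
    have h0 : (n:ℤ) * (a0 + ((n:ℤ)-1)*b) = 0 := by rw [← hzv, htz]
    rcases mul_eq_zero.mp h0 with h' | h'
    · exfalso
      have : (n:ℤ) ≠ 0 := by exact_mod_cast (by omega : n ≠ 0)
      exact this h'
    · linarith
  refine ⟨Multiplicative.ofAdd b, ?_⟩
  -- compare T with ν^b on generators
  set T' : ArtinB n →* Multiplicative ℤ := MonoidHom.mk' (fun x => (nuHom n x) ^ b)
    (fun x y => by rw [map_mul, mul_zpow]) with hT'
  have hTT' : T = T' := by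
    apply PresentedGroup.ext
    intro x
    have hT'x : T' (PresentedGroup.of x) = (nuHom n (artinBGen x)) ^ b := rfl
    have hTx : T (PresentedGroup.of x) = Multiplicative.ofAdd (t (artinBGen x)) := rfl
    rw [hTx, hT'x, nuHom_gen]
    rcases Nat.eq_zero_or_pos x.val with hxv | hxv
    · rw [if_pos hxv, ← sg_eq_gen x, hxv, ← ha0]
      rw [show (Multiplicative.ofAdd (1 - (n:ℤ))) ^ b
          = Multiplicative.ofAdd (b * (1 - (n:ℤ))) from by
        rw [← ofAdd_zsmul, smul_eq_mul]]
      rw [hs0]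
    · rw [if_neg (by omega), ← sg_eq_gen x, hA1 x.val hxv x.isLt]
      rw [show (Multiplicative.ofAdd (1:ℤ)) ^ b = Multiplicative.ofAdd (b * 1) from by
        rw [← ofAdd_zsmul, smul_eq_mul], mul_one]
  have htfinal : ∀ x, t x = b * Multiplicative.toAdd (nuHom n x) := by
    intro x
    have h2 := congrArg Multiplicative.toAdd (DFunLike.congr_fun hTT' x)
    rw [hTapp, toAdd_ofAdd] at h2
    rw [h2, show T' x = (nuHom n x) ^ b from rfl, toAdd_zpow, smul_eq_mul]
  apply MulEquiv.ext
  intro x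
  rw [Phi_apply, heq x, toAdd_ofAdd, ← htfinal x]

end AB


/-- For `n ≥ 3`, the transvection subgroup of `Aut(C(B_n))` — the
subgroup of all transvections of the Artin group of type `B_n` — is infinite cyclic. -/
theorem artinB_transvection_subgroup_infinite_cyclic
    (n : ℕ) (hn : 3 ≤ n) :
    ∃ H : Subgroup (MulAut (ArtinB n)),
      (H : Set (MulAut (ArtinB n))) = {φ | IsTransvection (artinBTwist n) φ} ∧
      Nonempty (H ≃* Multiplicative ℤ) := by
  refine ⟨(AB.Phi hn).range, ?_, ⟨(MonoidHom.ofInjective (AB.Phi_inj hn)).symm⟩⟩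
  ext φ
  simp only [SetLike.mem_coe, MonoidHom.mem_range, Set.mem_setOf_eq]
  constructor
  · rintro ⟨k, rfl⟩
    exact AB.isTransvection_of_mem hn k
  · intro hφ
    exact AB.mem_of_isTransvection hn φ hφ
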